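/- Let n ≥ 3 and for i ≥ 1 let Q_i ⊂ ℝ^{n-1} be a rectangle with one edge of length r_i ∈ (0, 1/2) and the other n−2 edges of length √2 · r_i². Let W_i ⊂ ℝⁿ be the rotationally symmetric annular region around the axis J_i of the cylinder over Q_i, between radii r_i² and r_i, and define u_i(x) = (log(1/d(x,J_i)) − log(1/r_i)) / (log(1/r_i²) − log(1/r_i)) on W_i, extended by 1 inside and 0 outside. Then ∫ |∇u_i|^{n-1} (log(e + |∇u_i|))^λ dx ≤ C r_i (log(1/r_i))^{λ-(n-2)} for a constant C = C(n, λ). -/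

import Mathlib

open MeasureTheory Metric Set Filter

private lemma clamp_lip (a b : ℝ) : |min 1 (max 0 a) - min 1 (max 0 b)| ≤ |a - b| := by
  have h1 : |max 0 a - max 0 b| ≤ |a - b| := by
    simpa [max_comm] using abs_max_sub_max_le_abs a b 0
  have h2 : |min 1 (max 0 a) - min 1 (max 0 b)| ≤ |max 0 a - max 0 b| := by
    simpa using abs_min_sub_min_le_max 1 (max 0 a) 1 (max 0 b)
  exact h2.trans h1

private lemma log_lip {a s t : ℝ} (ha : 0 < a) (hs : a ≤ s) (ht : a ≤ t) :
    |Real.log s - Real.log t| ≤ |s - t| / a := by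
  wlog h : t ≤ s generalizing s t
  · rw [abs_sub_comm, abs_sub_comm s t]; exact this ht hs (le_of_not_ge h)
  have hsp := ha.trans_le hs
  have htp := ha.trans_le ht
  have hlog : Real.log s - Real.log t = Real.log (s / t) := (Real.log_div hsp.ne' htp.ne').symm
  have h1 : Real.log (s / t) ≤ s / t - 1 := Real.log_le_sub_one_of_pos (div_pos hsp htp)
  have h2 : (0:ℝ) ≤ Real.log (s/t) := Real.log_nonneg ((one_le_div htp).2 h)
  rw [hlog, abs_of_nonneg h2, abs_of_nonneg (by linarith)]
  have h3 : s / t - 1 = (s - t) / t := by field_simp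
  have h4 : (s - t) / t ≤ (s - t) / a := by gcongr
  linarith

private lemma log_le_half {L : ℝ} (hL : 0 < L) : Real.log L ≤ L / 2 := by
  have h1 : Real.log (Real.sqrt L) ≤ Real.sqrt L - 1 :=
    Real.log_le_sub_one_of_pos (Real.sqrt_pos.2 hL)
  have h2 : Real.log (Real.sqrt L) = Real.log L / 2 := Real.log_sqrt hL.le
  nlinarith [Real.sq_sqrt hL.le, Real.sqrt_nonneg L, sq_nonneg (Real.sqrt L - 2)]

set_option maxHeartbeats 2000000 in
private lemma main_est (n : ℕ) (hn : 2 < n) (lam r : ℝ) (hr : 0 < r) (hr2 : r < 1/2) :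
    ∫ x : EuclideanSpace ℝ (Fin n),
        ‖fderiv ℝ (fun y : EuclideanSpace ℝ (Fin n) =>
          min 1 (max 0
            ((Real.log (1 / Metric.infDist y
                {z : EuclideanSpace ℝ (Fin n) |
                  |z ⟨0, by omega⟩| ≤ r/2 ∧ ∀ i, i ≠ ⟨0, by omega⟩ → z i = 0})
              - Real.log (1/r)) /
             (Real.log (1/r^2) - Real.log (1/r))))) x‖ ^ ((n:ℝ)-1) *
        (Real.log (Real.exp 1 +
          ‖fderiv ℝ (fun y : EuclideanSpace ℝ (Fin n) =>
            min 1 (max 0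
              ((Real.log (1 / Metric.infDist y
                  {z : EuclideanSpace ℝ (Fin n) |
                    |z ⟨0, by omega⟩| ≤ r/2 ∧ ∀ i, i ≠ ⟨0, by omega⟩ → z i = 0})
                - Real.log (1/r)) /
               (Real.log (1/r^2) - Real.log (1/r))))) x‖)) ^ lam
      ≤ (9 * 5 ^ |lam| * 4 ^ ((n:ℝ)-1) / Real.log 2) * r * (Real.log (1/r)) ^ (lam - ((n:ℝ)-2)) := by
  classical
  set i0 : Fin n := (⟨0, by omega⟩ : Fin n) with hi0
  set J : Set (EuclideanSpace ℝ (Fin n)) :=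
    {z : EuclideanSpace ℝ (Fin n) | |z i0| ≤ r/2 ∧ ∀ i, i ≠ i0 → z i = 0} with hJdef
  set L : ℝ := Real.log (1/r) with hLdef
  set U : EuclideanSpace ℝ (Fin n) → ℝ := fun y =>
    min 1 (max 0 ((Real.log (1 / infDist y J) - L) / (Real.log (1/r^2) - L))) with hUdef
  -- basic numerics
  have hr1 : r < 1 := by linarith
  have hrr : r^2 < r := by nlinarith
  have hr2pos : 0 < r^2 := by positivity
  have hLr : L = -Real.log r := by rw [hLdef, one_div, Real.log_inv]
  have hlog2 : (0:ℝ) < Real.log 2 := Real.log_pos (by norm_num)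
  have hL2 : Real.log 2 ≤ L := by
    rw [hLdef]
    refine Real.log_le_log (by norm_num) ?_
    rw [show (2:ℝ) = 1/(1/2) by norm_num]
    exact one_div_le_one_div_of_le hr hr2.le
  have hL0 : 0 < L := lt_of_lt_of_le hlog2 hL2
  have hden : Real.log (1/r^2) - L = L := by
    rw [hLdef]
    have h1 : (1:ℝ)/r^2 = (1/r)^2 := by rw [div_pow, one_pow]
    rw [h1, Real.log_pow]
    push_cast; ring
  have he' : (0:ℝ) < (n:ℝ) - 1 := by
    have : (3:ℝ) ≤ (n:ℝ) := by exact_mod_cast (hn : 3 ≤ n)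
    linarith
  -- phi and psi
  set φ : ℝ → ℝ := fun t => (Real.log (1/t) - L) / L with hφdef
  set ψ : ℝ → ℝ := fun t => min 1 (max 0 (φ t)) with hψdef
  set d : EuclideanSpace ℝ (Fin n) → ℝ := fun x => infDist x J with hddef
  have hUd : U = fun y => ψ (d y) := by
    funext y
    simp only [hUdef, hψdef, hφdef, hddef, hden]
  have hφeq : ∀ t : ℝ, φ t = (Real.log r - Real.log t) / L := by
    intro t
    rw [hφdef]
    simp only [one_div, Real.log_inv, hLr]
    ring_nf
  have hlogr2 : Real.log (r^2) = 2 * Real.log r := by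
    rw [Real.log_pow]; push_cast; ring
  have hψ1 : ∀ t : ℝ, 0 < t → t < r^2 → ψ t = 1 := by
    intro t ht htr
    have h1 : Real.log t < 2 * Real.log r := by
      rw [← hlogr2]; exact Real.log_lt_log ht htr
    have h2 : 1 ≤ φ t := by
      rw [hφeq, le_div_iff₀ hL0, one_mul, hLr]; linarith
    rw [hψdef]; simp only
    rw [max_eq_right (by linarith), min_eq_left h2]
  have hψ2 : ∀ t : ℝ, r < t → ψ t = 0 := by
    intro t ht
    have h1 : Real.log r < Real.log t := Real.log_lt_log hr ht
    have h2 : φ t ≤ 0 := by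
      rw [hφeq]; apply div_nonpos_of_nonpos_of_nonneg <;> linarith
    rw [hψdef]; simp only
    rw [max_eq_left h2, min_eq_right (by norm_num)]
  have hψ3 : ∀ t : ℝ, r^2 < t → t < r → ψ t = φ t := by
    intro t ht htr
    have htpos : 0 < t := lt_trans hr2pos ht
    have h1 : Real.log t < Real.log r := Real.log_lt_log htpos htr
    have h2 : 2 * Real.log r < Real.log t := by rw [← hlogr2]; exact Real.log_lt_log hr2pos ht
    have h3 : 0 ≤ φ t := by rw [hφeq]; exact div_nonneg (by linarith) hL0.le
    have h4 : φ t ≤ 1 := by rw [hφeq, div_le_one hL0, hLr]; linarith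
    rw [hψdef]; simp only
    rw [max_eq_right h3, min_eq_right h4]
  have hψlip : ∀ a s t : ℝ, 0 < a → a ≤ s → a ≤ t → |ψ s - ψ t| ≤ |s - t| / (a * L) := by
    intro a s t ha hs ht
    have h1 : |ψ s - ψ t| ≤ |φ s - φ t| := clamp_lip _ _
    have h2 : φ s - φ t = (Real.log t - Real.log s) / L := by
      rw [hφeq, hφeq]; ring
    have h3 : |φ s - φ t| = |Real.log s - Real.log t| / L := by
      rw [h2, abs_div, abs_of_pos hL0, abs_sub_comm]
    have h4 := log_lip ha hs ht
    rw [h3] at h1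
    calc |ψ s - ψ t| ≤ |Real.log s - Real.log t| / L := h1
      _ ≤ (|s - t| / a) / L := by gcongr
      _ = |s - t| / (a * L) := by rw [div_div]
  have hφder : ∀ t : ℝ, 0 < t → HasDerivAt φ (-(t*L)⁻¹) t := by
    intro t ht
    have hφeq2 : φ = fun s => (-Real.log s - L)/L := by
      funext s; rw [hφdef]; simp [one_div, Real.log_inv]
    rw [hφeq2]
    have h1 := ((Real.hasDerivAt_log ht.ne').neg.sub_const L).div_const L
    exact h1.congr_deriv (by ring)
  -- geometry of J and d
  have hJne : J.Nonempty := by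
    refine ⟨0, ?_⟩
    rw [hJdef]
    constructor
    · simp; positivity
    · intro i _; simp
  have hJclosed : IsClosed J := by
    rw [hJdef]
    have h1 : IsClosed {z : EuclideanSpace ℝ (Fin n) | |z i0| ≤ r/2} :=
      isClosed_le (continuous_abs.comp (EuclideanSpace.proj (𝕜 := ℝ) i0).continuous)
        continuous_const
    have h2 : IsClosed {z : EuclideanSpace ℝ (Fin n) | ∀ i, i ≠ i0 → z i = 0} := by
      have heq : {z : EuclideanSpace ℝ (Fin n) | ∀ i, i ≠ i0 → z i = 0}
          = ⋂ i, ⋂ _ : i ≠ i0, {z : EuclideanSpace ℝ (Fin n) | z i = 0} := by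
        ext z; simp
      rw [heq]
      exact isClosed_iInter fun i => isClosed_iInter fun _ =>
        isClosed_eq (EuclideanSpace.proj (𝕜 := ℝ) i).continuous continuous_const
    exact h1.inter h2
  have hcoordsmul : ∀ (a b : ℝ) (z w : EuclideanSpace ℝ (Fin n)) (i : Fin n),
      (a • z + b • w) i = a * z i + b * w i := by
    intro a b z w i; rfl
  have hJconv : Convex ℝ J := by
    intro z hz w hw a b ha hb hab
    rw [hJdef] at hz hw ⊢
    constructor
    · rw [hcoordsmul]
      calc |a * z i0 + b * w i0| ≤ |a * z i0| + |b * w i0| := abs_add_le _ _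
        _ = a * |z i0| + b * |w i0| := by
            rw [abs_mul, abs_mul, abs_of_nonneg ha, abs_of_nonneg hb]
        _ ≤ a * (r/2) + b * (r/2) := by gcongr; exacts [hz.1, hw.1]
        _ = r/2 := by rw [← add_mul, hab, one_mul]
    · intro i hi
      rw [hcoordsmul, hz.2 i hi, hw.2 i hi]; ring
  have hdnn : ∀ x, 0 ≤ d x := fun x => infDist_nonneg
  have hdlip : ∀ x y, |d x - d y| ≤ dist x y := by
    intro x y
    have h1 := infDist_le_infDist_add_dist (x := x) (y := y) (s := J)
    have h2 := infDist_le_infDist_add_dist (x := y) (y := x) (s := J)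
    rw [dist_comm] at h2
    rw [abs_sub_le_iff]; constructor <;> [skip; skip] <;>
      simp only [hddef] <;> [linarith; linarith]
  have hdcont : Continuous d := (lipschitz_infDist_pt (s := J)).continuous
  have hdconv : ∀ (x y : EuclideanSpace ℝ (Fin n)) (a b : ℝ), 0 ≤ a → 0 ≤ b → a + b = 1 →
      d (a • x + b • y) ≤ a * d x + b * d y := by
    intro x y a b ha hb hab
    obtain ⟨p, hp, hxp⟩ := hJclosed.exists_infDist_eq_dist hJne x
    obtain ⟨q, hq, hyq⟩ := hJclosed.exists_infDist_eq_dist hJne y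
    have hmem : a • p + b • q ∈ J := hJconv hp hq ha hb hab
    calc d (a • x + b • y) ≤ dist (a • x + b • y) (a • p + b • q) := infDist_le_dist_of_mem hmem
      _ ≤ a * dist x p + b * dist y q := by
          rw [dist_eq_norm, dist_eq_norm, dist_eq_norm]
          calc ‖a • x + b • y - (a • p + b • q)‖ = ‖a • (x - p) + b • (y - q)‖ := by
                congr 1; module
            _ ≤ ‖a • (x - p)‖ + ‖b • (y - q)‖ := norm_add_le _ _
            _ = a * ‖x - p‖ + b * ‖y - q‖ := by
                rw [norm_smul, norm_smul, Real.norm_of_nonneg ha, Real.norm_of_nonneg hb]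
      _ = a * d x + b * d y := by simp only [hddef]; rw [← hxp, ← hyq]
  have hray : ∀ (x p : EuclideanSpace ℝ (Fin n)), p ∈ J → dist x p = d x → 0 < d x →
      ∀ s : ℝ, -(d x) ≤ s → d (x + s • ((d x)⁻¹ • (x - p))) = d x + s := by
    intro x p hp hxp ht s hs
    set t := d x with htdef
    set v : EuclideanSpace ℝ (Fin n) := t⁻¹ • (x - p) with hvdef
    have hxpv : x - p = t • v := by
      rw [hvdef, smul_inv_smul₀ ht.ne']
    have hnv : ‖v‖ = 1 := by
      rw [hvdef, norm_smul, Real.norm_eq_abs, abs_inv, abs_of_pos ht, ← dist_eq_norm, hxp,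
        inv_mul_cancel₀ ht.ne']
    have hupper : d (x + s • v) ≤ t + s := by
      calc d (x + s • v) ≤ dist (x + s • v) p := infDist_le_dist_of_mem hp
        _ = ‖x - p + s • v‖ := by rw [dist_eq_norm]; congr 1; module
        _ = ‖(t + s) • v‖ := by rw [hxpv]; congr 1; module
        _ = |t + s| * ‖v‖ := by rw [norm_smul, Real.norm_eq_abs]
        _ = t + s := by rw [hnv, mul_one, abs_of_nonneg (by linarith)]
    have hlower : t + s ≤ d (x + s • v) := by
      rcases le_or_gt s 0 with hs0 | hs0
      · have h1 := hdlip x (x + s • v)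
        have h2 : dist x (x + s • v) = |s| := by
          rw [dist_eq_norm]
          have h0 : x - (x + s • v) = (-s) • v := by module
          rw [h0, norm_smul, hnv, mul_one, Real.norm_eq_abs, abs_neg]
        rw [h2, abs_of_nonpos hs0] at h1
        have := abs_le.1 h1
        linarith [this.1]
      · have hts : 0 < t + s := by linarith
        have hkey : d x ≤ (s/(t+s)) * d p + (t/(t+s)) * d (x + s • v) := by
          have hx' : x = (s/(t+s)) • p + (t/(t+s)) • (x + s • v) := by
            have hxp2 : x = t • v + p := sub_eq_iff_eq_add.1 hxpv
            rw [hxp2]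
            match_scalars <;> (field_simp; try ring)
          calc d x = d ((s/(t+s)) • p + (t/(t+s)) • (x + s • v)) := by rw [← hx']
            _ ≤ (s/(t+s)) * d p + (t/(t+s)) * d (x + s • v) :=
                hdconv _ _ _ _ (by positivity) (by positivity) (by field_simp; ring)
        have hdp : d p = 0 := infDist_zero_of_mem hp
        rw [hdp, mul_zero, zero_add] at hkey
        rw [div_mul_eq_mul_div, le_div_iff₀ hts] at hkey
        nlinarith [hkey]
    linarith [hupper, hlower]
  have hray' : ∀ x : EuclideanSpace ℝ (Fin n), 0 < d x →
      ∃ v : EuclideanSpace ℝ (Fin n), ‖v‖ = 1 ∧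
        ∀ s : ℝ, -(d x) ≤ s → d (x + s • v) = d x + s := by
    intro x hx
    obtain ⟨p, hp, hdist⟩ := hJclosed.exists_infDist_eq_dist hJne x
    have hdist' : dist x p = d x := hdist.symm
    refine ⟨(d x)⁻¹ • (x - p), ?_, fun s hs => hray x p hp hdist' hx s hs⟩
    rw [norm_smul, Real.norm_eq_abs, abs_inv, abs_of_pos hx, ← dist_eq_norm, hdist',
      inv_mul_cancel₀ hx.ne']
  -- derivative analysis
  have hloc1 : ∀ x, 0 < d x → d x < r^2 → fderiv ℝ U x = 0 := by
    intro x hx1 hx2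
    have hopen : IsOpen {y : EuclideanSpace ℝ (Fin n) | 0 < d y ∧ d y < r^2} :=
      (isOpen_lt continuous_const hdcont).inter (isOpen_lt hdcont continuous_const)
    have hev : U =ᶠ[nhds x] (fun _ => (1:ℝ)) := by
      filter_upwards [hopen.mem_nhds ⟨hx1, hx2⟩] with y hy
      rw [hUd]
      exact hψ1 _ hy.1 hy.2
    rw [hev.fderiv_eq]
    exact fderiv_const_apply 1
  have hloc2 : ∀ x, r < d x → fderiv ℝ U x = 0 := by
    intro x hx1
    have hopen : IsOpen {y : EuclideanSpace ℝ (Fin n) | r < d y} :=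
      isOpen_lt continuous_const hdcont
    have hev : U =ᶠ[nhds x] (fun _ => (0:ℝ)) := by
      filter_upwards [hopen.mem_nhds hx1] with y hy
      rw [hUd]
      exact hψ2 _ hy
    rw [hev.fderiv_eq]
    exact fderiv_const_apply 0
  have hmainD : ∀ x, r^2 < d x → d x < r → DifferentiableAt ℝ U x →
      ‖fderiv ℝ U x‖ = (d x * L)⁻¹ := by
    intro x hx1 hx2 hdiff
    have ht0 : 0 < d x := lt_trans hr2pos hx1
    set t := d x with htdef
    set D := fderiv ℝ U x with hDdef
    have hD : HasFDerivAt U D x := hdiff.hasFDerivAt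
    have hline : ∀ w : EuclideanSpace ℝ (Fin n),
        HasDerivAt (fun s : ℝ => U (x + s • w)) (D w) 0 := by
      intro w
      have hm : HasDerivAt (fun s : ℝ => x + s • w) w 0 := by
        simpa using ((hasDerivAt_id (0:ℝ)).smul_const w).const_add x
      have hD' : HasFDerivAt U D ((fun s : ℝ => x + s • w) 0) := by simpa using hD
      exact hD'.comp_hasDerivAt 0 hm
    have upper : ‖D‖ ≤ (t * L)⁻¹ := by
      refine ContinuousLinearMap.opNorm_le_bound _ (by positivity) fun w => ?_
      rcases eq_or_ne w 0 with rfl | hw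
      · simp
      have hw0 : 0 < ‖w‖ := norm_pos_iff.2 hw
      have hq := hline w
      have habs : Tendsto (fun s => |slope (fun s : ℝ => U (x + s • w)) 0 s|)
          (nhdsWithin 0 {0}ᶜ) (nhds ‖D w‖) := by
        rw [Real.norm_eq_abs]
        exact (hasDerivAt_iff_tendsto_slope.1 hq).abs
      have hb : Tendsto (fun s : ℝ => ‖w‖ * ((t - |s| * ‖w‖) * L)⁻¹)
          (nhdsWithin 0 {0}ᶜ) (nhds (‖w‖ * (t * L)⁻¹)) := by
        have h1 : ContinuousAt (fun s : ℝ => (t - |s| * ‖w‖) * L) 0 := by fun_prop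
        have h2 : ((t - |(0:ℝ)| * ‖w‖) * L) ≠ 0 := by
          simp only [abs_zero, zero_mul, sub_zero]; positivity
        have hcont : ContinuousAt (fun s : ℝ => ‖w‖ * ((t - |s| * ‖w‖) * L)⁻¹) 0 :=
          continuousAt_const.mul (h1.inv₀ h2)
        have := hcont.tendsto.mono_left (nhdsWithin_le_nhds (s := ({0}ᶜ : Set ℝ)))
        simpa using this
      have hev : ∀ᶠ s in nhdsWithin (0:ℝ) {0}ᶜ,
          |slope (fun s : ℝ => U (x + s • w)) 0 s| ≤ ‖w‖ * ((t - |s| * ‖w‖) * L)⁻¹ := by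
        have hmem : Ioo (-(t/(2*‖w‖))) (t/(2*‖w‖)) ∈ nhdsWithin (0:ℝ) {0}ᶜ :=
          nhdsWithin_le_nhds (Ioo_mem_nhds (by rw [neg_lt_zero]; positivity) (by positivity))
        filter_upwards [hmem, self_mem_nhdsWithin] with s hsI hs0
        have hs0' : s ≠ 0 := hs0
        have hsabs : |s| < t/(2*‖w‖) := abs_lt.2 ⟨hsI.1, hsI.2⟩
        have hsw : |s| * ‖w‖ < t/2 := by
          rw [← lt_div_iff₀ hw0]; exact hsabs.trans_le (le_of_eq (by ring))
        set a := t - |s| * ‖w‖ with hadef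
        have ha0 : 0 < a := by
          simp only [hadef]; nlinarith [abs_nonneg s, hw0.le]
        have hdistsw : dist (x + s • w) x = |s| * ‖w‖ := by
          rw [dist_eq_norm]
          have h0 : x + s • w - x = s • w := by module
          rw [h0, norm_smul, Real.norm_eq_abs]
        have hd2 : a ≤ d (x + s • w) := by
          have h6 := hdlip (x + s • w) x
          rw [hdistsw] at h6
          have := abs_le.1 h6
          simp only [hadef]; linarith [this.1]
        have hd1 : a ≤ t := by
          simp only [hadef]; nlinarith [abs_nonneg s, hw0.le]
        have hU : |U (x + s • w) - U x| ≤ (|s| * ‖w‖) / (a * L) := by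
          have h5 := hψlip a (d (x + s • w)) (d x) ha0 hd2 hd1
          have h6 := hdlip (x + s • w) x
          rw [hdistsw] at h6
          calc |U (x + s • w) - U x| = |ψ (d (x + s • w)) - ψ (d x)| := by rw [hUd]
            _ ≤ |d (x + s • w) - d x| / (a * L) := h5
            _ ≤ (|s| * ‖w‖) / (a * L) := by gcongr
        have hslope : |slope (fun s : ℝ => U (x + s • w)) 0 s|
            = |U (x + s • w) - U x| / |s| := by
          rw [slope_def_field, div_eq_mul_inv, abs_mul, abs_inv, sub_zero, div_eq_mul_inv]
          congr 1
          simp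
        rw [hslope, div_le_iff₀ (abs_pos.2 hs0')]
        calc |U (x + s • w) - U x| ≤ (|s| * ‖w‖) / (a * L) := hU
          _ = ‖w‖ * (a * L)⁻¹ * |s| := by ring
      exact le_of_tendsto_of_tendsto habs hb hev |>.trans (le_of_eq (by ring))
    have lower : (t * L)⁻¹ ≤ ‖D‖ := by
      obtain ⟨v, hnv, hdv⟩ := hray' x ht0
      have hq := hline v
      have hev : (fun s : ℝ => U (x + s • v)) =ᶠ[nhds 0] (fun s => φ (t + s)) := by
        have hmem : Ioo (r^2 - t) (r - t) ∈ nhds (0:ℝ) :=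
          Ioo_mem_nhds (by linarith) (by linarith)
        filter_upwards [hmem] with s hs
        have hds : d (x + s • v) = t + s := hdv s (by linarith [hs.1, hr2pos])
        rw [hUd]
        show ψ (d (x + s • v)) = φ (t + s)
        rw [hds]
        exact hψ3 (t+s) (by linarith [hs.1]) (by linarith [hs.2])
      have hφt : HasDerivAt φ (-(t*L)⁻¹) ((fun s : ℝ => t + s) 0) := by
        simpa using hφder t ht0
      have h2 : HasDerivAt (fun s : ℝ => t + s) 1 0 := by
        simpa using (hasDerivAt_id (0:ℝ)).const_add t
      have hφd : HasDerivAt (fun s : ℝ => φ (t + s)) (-(t*L)⁻¹) 0 := by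
        have := hφt.comp 0 h2; rw [mul_one] at this; exact this
      have hq2 : HasDerivAt (fun s : ℝ => U (x + s • v)) (-(t*L)⁻¹) 0 :=
        hφd.congr_of_eventuallyEq hev
      have huniq : D v = -(t*L)⁻¹ := hq.unique hq2
      calc (t*L)⁻¹ = ‖D v‖ := by
            rw [huniq, Real.norm_eq_abs, abs_neg, abs_of_pos (by positivity)]
        _ ≤ ‖D‖ * ‖v‖ := D.le_opNorm v
        _ = ‖D‖ := by rw [hnv, mul_one]
    exact le_antisymm upper lower
  -- null sets
  have hintJ : interior J = ∅ := by
    rw [eq_empty_iff_forall_notMem]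
    intro x hx
    obtain ⟨ε, hε, hball⟩ := Metric.isOpen_iff.1 isOpen_interior x hx
    set i1 : Fin n := ⟨1, by omega⟩ with hi1
    have hi10 : i1 ≠ i0 := by rw [hi1, hi0]; simp [Fin.ext_iff]
    set y := x + (ε/2) • EuclideanSpace.single i1 (1:ℝ) with hydef
    have hyx : dist y x = ε/2 := by
      rw [dist_eq_norm]
      have h0 : y - x = (ε/2) • EuclideanSpace.single i1 (1:ℝ) := by rw [hydef]; module
      rw [h0, norm_smul, EuclideanSpace.norm_single, Real.norm_eq_abs, norm_one,
        abs_of_pos (by linarith), mul_one]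
    have hyJ : y ∈ J := interior_subset (hball (by rw [mem_ball, hyx]; linarith))
    have hxJ : x ∈ J := interior_subset hx
    rw [hJdef] at hyJ hxJ
    have h1 : y i1 = 0 := hyJ.2 i1 hi10
    have h2 : x i1 = 0 := hxJ.2 i1 hi10
    have h3 : y i1 = x i1 + ε/2 := by
      have h4 : y i1 = x i1 + (ε/2) * (EuclideanSpace.single i1 (1:ℝ) i1) := rfl
      rw [h4, EuclideanSpace.single_apply]
      simp
    rw [h1, h2] at h3
    linarith
  have hJnull : volume J = 0 := by
    have h1 : J ⊆ frontier J := by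
      intro x hx
      rw [frontier, hJclosed.closure_eq, hintJ, diff_empty]
      exact hx
    exact measure_mono_null h1 (hJconv.addHaar_frontier volume)
  have hlevel : ∀ t : ℝ, 0 < t → volume {x : EuclideanSpace ℝ (Fin n) | d x = t} = 0 := by
    intro t ht
    set Kt : Set (EuclideanSpace ℝ (Fin n)) := {x | d x ≤ t} with hKtdef
    have hKconv : Convex ℝ Kt := by
      intro z hz w hw a b ha hb hab
      have h1 := hdconv z w a b ha hb hab
      have hz' : d z ≤ t := hz
      have hw' : d w ≤ t := hw
      show d (a • z + b • w) ≤ t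
      calc d (a • z + b • w) ≤ a * d z + b * d w := h1
        _ ≤ a * t + b * t := by gcongr
        _ = t := by rw [← add_mul, hab, one_mul]
    have hsub : {x : EuclideanSpace ℝ (Fin n) | d x = t} ⊆ frontier Kt := by
      intro x hx
      have hxt : d x = t := hx
      rw [frontier]
      refine ⟨subset_closure (show d x ≤ t from le_of_eq hxt), ?_⟩
      intro hint
      obtain ⟨ε, hε, hball⟩ := Metric.isOpen_iff.1 isOpen_interior x hint
      have hx0 : 0 < d x := hxt ▸ ht
      obtain ⟨v, hnv, hdv⟩ := hray' x hx0
      set s := min (ε/2) (d x) with hsdef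
      have hs0 : 0 < s := lt_min (by linarith) hx0
      have hdy : d (x + s • v) = d x + s := hdv s (by linarith)
      have hyball : x + s • v ∈ ball x ε := by
        rw [mem_ball, dist_eq_norm]
        have h0 : x + s • v - x = s • v := by module
        rw [h0, norm_smul, hnv, Real.norm_eq_abs, abs_of_pos hs0, mul_one]
        exact lt_of_le_of_lt (min_le_left _ _) (by linarith)
      have hyK0 : x + s • v ∈ Kt := interior_subset (hball hyball)
      have hyK : d (x + s • v) ≤ t := hyK0
      rw [hdy, hxt] at hyK
      linarith
    exact measure_mono_null hsub (hKconv.addHaar_frontier volume)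
  -- shells
  set K : ℕ := ⌈L / Real.log 2⌉₊ with hKdef
  set τ : ℕ → ℝ := fun k => r / 2^k with hτdef
  have hτpos : ∀ k, 0 < τ k := by intro k; rw [hτdef]; positivity
  have hτler : ∀ k, τ k ≤ r := by
    intro k
    rw [hτdef]
    apply div_le_self hr.le
    calc (1:ℝ) = 2^0 := by norm_num
      _ ≤ 2^k := pow_le_pow_right₀ (by norm_num) (Nat.zero_le k)
  have hττ : ∀ k, τ (k+1) = τ k / 2 := by
    intro k; rw [hτdef]; simp only; rw [pow_succ, ← div_div]
  set A : ℕ → Set (EuclideanSpace ℝ (Fin n)) :=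
    fun k => {x | τ (k+1) ≤ d x ∧ d x ≤ τ k} with hAdef
  have hAmeas : ∀ k, MeasurableSet (A k) := by
    intro k
    have : A k = d ⁻¹' (Icc (τ (k+1)) (τ k)) := rfl
    rw [this]
    exact hdcont.measurable measurableSet_Icc
  -- volume bound for shells
  have hbox : ∀ av bv : Fin n → ℝ,
      volume {x : EuclideanSpace ℝ (Fin n) | ∀ i, x i ∈ Icc (av i) (bv i)}
        = ∏ i, ENNReal.ofReal (bv i - av i) := by
    intro av bv
    have hmp := EuclideanSpace.volume_preserving_symm_measurableEquiv_toLp (Fin n)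
    have hset : {x : EuclideanSpace ℝ (Fin n) | ∀ i, x i ∈ Icc (av i) (bv i)}
        = (MeasurableEquiv.toLp 2 (Fin n → ℝ)).symm ⁻¹' (Set.univ.pi fun i => Icc (av i) (bv i)) := by
      ext x
      simp only [mem_preimage, Set.mem_pi, mem_univ, forall_true_left, mem_setOf_eq]
      rfl
    rw [hset, hmp.measure_preimage
      ((MeasurableSet.univ_pi (fun i => measurableSet_Icc)).nullMeasurableSet)]
    rw [volume_pi_pi]
    exact Finset.prod_congr rfl fun i _ => Real.volume_Icc
  have hcoord : ∀ (x z : EuclideanSpace ℝ (Fin n)) (i : Fin n), |x i - z i| ≤ dist x z := by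
    intro x z i
    rw [EuclideanSpace.dist_eq]
    have h1 : |x i - z i| = Real.sqrt (dist (x i) (z i) ^2) := by
      rw [Real.sqrt_sq dist_nonneg, Real.dist_eq]
    rw [h1]
    apply Real.sqrt_le_sqrt
    exact Finset.single_le_sum (f := fun j => dist (x j) (z j) ^ 2)
      (fun j _ => sq_nonneg _) (Finset.mem_univ i)
  have hAvol : ∀ k, volume (A k)
      ≤ ENNReal.ofReal (r + 2*τ k) * ENNReal.ofReal (2*τ k) ^ (n-1) := by
    intro k
    set av : Fin n → ℝ := fun i => if i = i0 then -(r/2 + τ k) else -(τ k) with havdef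
    set bv : Fin n → ℝ := fun i => if i = i0 then r/2 + τ k else τ k with hbvdef
    have hAsub : A k ⊆ {x : EuclideanSpace ℝ (Fin n) | ∀ i, x i ∈ Icc (av i) (bv i)} := by
      intro x hx
      rw [hAdef] at hx
      obtain ⟨p, hp, hdist⟩ := hJclosed.exists_infDist_eq_dist hJne x
      have hdx : dist x p ≤ τ k := by
        rw [← hdist]
        exact hx.2
      rw [hJdef] at hp
      intro i
      have h2 := hcoord x p i
      rcases eq_or_ne i i0 with hi | hi
      · have h3 : |x i| ≤ r/2 + τ k := by
          calc |x i| ≤ |p i| + |x i - p i| := by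
                have := abs_add_le (p i) (x i - p i)
                simpa using this
            _ ≤ r/2 + τ k := add_le_add (by rw [hi]; exact hp.1) (h2.trans hdx)
        rw [havdef, hbvdef]
        simp only [if_pos hi]
        exact abs_le.1 h3
      · have h3 : |x i| ≤ τ k := by
          have h4 := hp.2 i hi
          calc |x i| = |x i - p i + p i| := by ring_nf
            _ = |x i - p i| := by rw [h4, add_zero]
            _ ≤ τ k := h2.trans hdx
        rw [havdef, hbvdef]
        simp only [if_neg hi]
        exact abs_le.1 h3
    calc volume (A k) ≤ volume {x : EuclideanSpace ℝ (Fin n) | ∀ i, x i ∈ Icc (av i) (bv i)} :=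
          measure_mono hAsub
      _ = ∏ i, ENNReal.ofReal (bv i - av i) := hbox av bv
      _ = ENNReal.ofReal (r + 2*τ k) * ENNReal.ofReal (2*τ k) ^ (n-1) := by
          rw [← Finset.mul_prod_erase Finset.univ _ (Finset.mem_univ i0)]
          have h1 : ∀ i ∈ Finset.univ.erase i0,
              ENNReal.ofReal (bv i - av i) = ENNReal.ofReal (2*τ k) := by
            intro i hi
            have hi' : i ≠ i0 := (Finset.mem_erase.1 hi).1
            rw [havdef, hbvdef]
            simp only [if_neg hi']
            congr 1; ring
          rw [Finset.prod_congr rfl h1, Finset.prod_const,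
            Finset.card_erase_of_mem (Finset.mem_univ i0), Finset.card_univ, Fintype.card_fin]
          have h2 : bv i0 - av i0 = r + 2 * τ k := by
            rw [havdef, hbvdef]; simp only [eq_self_iff_true, if_true]; ring
          rw [h2]
  have hAfin : ∀ k, volume (A k) < ⊤ := by
    intro k
    refine lt_of_le_of_lt (hAvol k) ?_
    exact ENNReal.mul_lt_top ENNReal.ofReal_lt_top (ENNReal.pow_lt_top ENNReal.ofReal_lt_top)
  set Cl : ℝ := 5 ^ |lam| with hCldef
  have hCl0 : 0 < Cl := Real.rpow_pos_of_pos (by norm_num) _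
  set c : ℕ → ℝ := fun k => Cl * L ^ lam * ((τ (k+1) * L) ^ ((n:ℝ)-1))⁻¹ with hcdef
  have hc0 : ∀ k, 0 ≤ c k := by
    intro k
    rw [hcdef]
    have h1 : (0:ℝ) < τ (k+1) * L := mul_pos (hτpos _) hL0
    positivity
  set h : EuclideanSpace ℝ (Fin n) → ℝ :=
    fun x => ∑ k ∈ Finset.range (K+1), (A k).indicator (fun _ => c k) x with hhdef
  have hh0 : ∀ x, 0 ≤ h x := by
    intro x
    rw [hhdef]
    exact Finset.sum_nonneg fun k _ => Set.indicator_nonneg (fun _ _ => hc0 k) x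
  have hIh : Integrable h := by
    rw [hhdef]
    apply integrable_finset_sum
    intro k _
    rw [integrable_indicator_iff (hAmeas k)]
    exact integrableOn_const (hAfin k).ne
  -- pointwise facts
  have hF0 : ∀ x : EuclideanSpace ℝ (Fin n), fderiv ℝ U x = 0 →
      ‖fderiv ℝ U x‖ ^ ((n:ℝ)-1) * (Real.log (Real.exp 1 + ‖fderiv ℝ U x‖)) ^ lam = 0 := by
    intro x hx
    rw [hx]
    simp only [norm_zero, add_zero, Real.log_exp, Real.one_rpow]
    rw [Real.zero_rpow he'.ne', zero_mul]
  have hLam : ∀ x : EuclideanSpace ℝ (Fin n), r^2 < d x → d x < r →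
      L/2 ≤ Real.log (Real.exp 1 + (d x * L)⁻¹) ∧
        Real.log (Real.exp 1 + (d x * L)⁻¹) ≤ 5*L := by
    intro x hd1 hd2
    have hdx0 : 0 < d x := lt_trans hr2pos hd1
    have hdL : 0 < d x * L := mul_pos hdx0 hL0
    constructor
    · have h1 : Real.log ((d x * L)⁻¹) ≤ Real.log (Real.exp 1 + (d x * L)⁻¹) :=
        Real.log_le_log (by positivity) (le_add_of_nonneg_left (Real.exp_pos 1).le)
      have h2 : Real.log ((d x * L)⁻¹) = -(Real.log (d x) + Real.log L) := by
        rw [Real.log_inv, Real.log_mul hdx0.ne' hL0.ne']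
      have h3 : Real.log (d x) ≤ -L := by
        rw [hLr, neg_neg]
        exact Real.log_le_log hdx0 hd2.le
      have h4 : Real.log L ≤ L/2 := log_le_half hL0
      calc L/2 = L - L/2 := by ring
        _ ≤ -(Real.log (d x) + Real.log L) := by linarith
        _ = Real.log ((d x * L)⁻¹) := h2.symm
        _ ≤ _ := h1
    · have h1 : (d x * L)⁻¹ ≤ (r^2 * Real.log 2)⁻¹ := by
        apply inv_anti₀ (by positivity)
        exact mul_le_mul hd1.le hL2 hlog2.le hdx0.le
      have hlogtwo : (1:ℝ)/2 ≤ Real.log 2 := by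
        linarith [Real.log_two_gt_d9]
      have h2 : (r^2 * Real.log 2)⁻¹ ≤ 2 / r^2 := by
        rw [mul_inv]
        have h2a : (Real.log 2)⁻¹ ≤ 2 := by
          calc (Real.log 2)⁻¹ ≤ ((1:ℝ)/2)⁻¹ := inv_anti₀ (by norm_num) hlogtwo
            _ = 2 := by norm_num
        calc (r^2)⁻¹ * (Real.log 2)⁻¹ ≤ (r^2)⁻¹ * 2 := by
              apply mul_le_mul_of_nonneg_left h2a (by positivity)
          _ = 2 / r^2 := by rw [div_eq_mul_inv]; ring
      have he3 : Real.exp 1 ≤ 3 := by linarith [Real.exp_one_lt_d9]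
      have h4 : 3 + 2/r^2 ≤ (1/r)^5 := by
        rw [div_pow, one_pow, le_div_iff₀ (by positivity)]
        have h5 : (3 + 2/r^2) * r^5 = 3*r^5 + 2*r^3 := by field_simp
        rw [h5]
        have h6 : r^5 ≤ (1/2)^5 := pow_le_pow_left₀ hr.le hr2.le 5
        have h7 : r^3 ≤ (1/2)^3 := pow_le_pow_left₀ hr.le hr2.le 3
        norm_num at h6 h7 ⊢
        linarith
      calc Real.log (Real.exp 1 + (d x * L)⁻¹) ≤ Real.log ((1/r)^5) := by
            apply Real.log_le_log (by positivity)
            calc Real.exp 1 + (d x * L)⁻¹ ≤ 3 + 2/r^2 := add_le_add he3 (h1.trans h2)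
              _ ≤ (1/r)^5 := h4
        _ = 5 * L := by rw [Real.log_pow, hLdef]; push_cast; ring
  -- main pointwise bound
  have hpt : ∀ x : EuclideanSpace ℝ (Fin n), x ∉ J → d x ≠ r^2 → d x ≠ r →
      ‖fderiv ℝ U x‖ ^ ((n:ℝ)-1) * (Real.log (Real.exp 1 + ‖fderiv ℝ U x‖)) ^ lam ≤ h x := by
    intro x hxJ hxr2 hxr
    rcases lt_trichotomy (d x) (r^2) with hd1 | hd1 | hd1
    · rcases eq_or_lt_of_le (hdnn x) with hd0 | hd0
      · exact absurd ((hJclosed.mem_iff_infDist_zero hJne).2 hd0.symm) hxJ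
      · rw [hF0 x (hloc1 x hd0 hd1)]
        exact hh0 x
    · exact absurd hd1 hxr2
    · rcases lt_trichotomy (d x) r with hd2 | hd2 | hd2
      · by_cases hdiff : DifferentiableAt ℝ U x
        swap
        · rw [hF0 x (fderiv_zero_of_not_differentiableAt hdiff)]
          exact hh0 x
        have hnorm : ‖fderiv ℝ U x‖ = (d x * L)⁻¹ := hmainD x hd1 hd2 hdiff
        have hdx0 : 0 < d x := lt_trans hr2pos hd1
        have hdL : 0 < d x * L := mul_pos hdx0 hL0
        obtain ⟨hLaml, hLamh⟩ := hLam x hd1 hd2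
        set k : ℕ := ⌊Real.logb 2 (r / d x)⌋₊ with hkdef
        have hrd1 : 1 ≤ r / d x := (one_le_div hdx0).2 hd2.le
        have hlogb0 : 0 ≤ Real.logb 2 (r / d x) := Real.logb_nonneg (by norm_num) hrd1
        have hfle : (k:ℝ) ≤ Real.logb 2 (r / d x) := Nat.floor_le hlogb0
        have hflt : Real.logb 2 (r / d x) < (k:ℝ)+1 := by
          rw [hkdef]
          exact Nat.lt_floor_add_one _
        have h2k : (2:ℝ)^(k:ℕ) ≤ r / d x := by
          rw [← Real.rpow_natCast 2 k]
          calc (2:ℝ)^(k:ℝ) ≤ (2:ℝ)^(Real.logb 2 (r / d x)) :=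
                Real.rpow_le_rpow_of_exponent_le (by norm_num) hfle
            _ = r / d x := Real.rpow_logb (by norm_num) (by norm_num) (div_pos hr hdx0)
        have h2k' : r / d x < (2:ℝ)^(k+1 : ℕ) := by
          rw [← Real.rpow_natCast 2 (k+1)]
          calc r / d x = (2:ℝ)^(Real.logb 2 (r / d x)) :=
                (Real.rpow_logb (by norm_num) (by norm_num) (div_pos hr hdx0)).symm
            _ < (2:ℝ)^((k+1 : ℕ):ℝ) := by
                apply Real.rpow_lt_rpow_of_exponent_lt (by norm_num)
                push_cast
                exact hflt
        have hxAk : x ∈ A k := by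
          rw [hAdef]
          constructor
          · show τ (k+1) ≤ d x
            simp only [hτdef]
            rw [div_le_iff₀ (by positivity)]
            rw [div_lt_iff₀ hdx0] at h2k'
            linarith
          · show d x ≤ τ k
            simp only [hτdef]
            rw [le_div_iff₀ (by positivity)]
            rw [le_div_iff₀ hdx0] at h2k
            linarith
        have hkK : k ∈ Finset.range (K+1) := by
          rw [Finset.mem_range]
          have h5 : Real.logb 2 (r / d x) ≤ Real.logb 2 (1/r) := by
            rw [Real.logb_le_logb (by norm_num) (div_pos hr hdx0) (by positivity)]
            calc r / d x ≤ r / r^2 := by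
                  apply div_le_div_of_nonneg_left hr.le hr2pos hd1.le
              _ = 1/r := by rw [pow_two]; field_simp
          have h6 : Real.logb 2 (1/r) = L / Real.log 2 := by
            rw [← Real.log_div_log, hLdef]
          have h7 : (k:ℝ) ≤ (K:ℝ) := (hfle.trans (h5.trans_eq h6)).trans (Nat.le_ceil _)
          have h8 : k ≤ K := by exact_mod_cast h7
          omega
        have hck : ‖fderiv ℝ U x‖ ^ ((n:ℝ)-1) * (Real.log (Real.exp 1 + ‖fderiv ℝ U x‖)) ^ lam
            ≤ c k := by
          rw [hnorm, hcdef]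
          have hτL : 0 < τ (k+1) * L := mul_pos (hτpos _) hL0
          have hA1 : ((d x * L)⁻¹) ^ ((n:ℝ)-1) ≤ ((τ (k+1) * L) ^ ((n:ℝ)-1))⁻¹ := by
            rw [Real.inv_rpow hdL.le]
            apply inv_anti₀ (Real.rpow_pos_of_pos hτL _)
            apply Real.rpow_le_rpow hτL.le ?_ he'.le
            exact mul_le_mul_of_nonneg_right hxAk.1 hL0.le
          have hA2 : (Real.log (Real.exp 1 + (d x * L)⁻¹)) ^ lam ≤ Cl * L ^ lam := by
            have hL20 : (0:ℝ) < L/2 := by linarith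
            rcases le_or_gt 0 lam with hlam | hlam
            · calc (Real.log (Real.exp 1 + (d x * L)⁻¹)) ^ lam ≤ (5*L) ^ lam :=
                  Real.rpow_le_rpow (le_trans hL20.le hLaml) hLamh hlam
                _ = 5 ^ lam * L ^ lam := Real.mul_rpow (by norm_num) hL0.le
                _ ≤ 5 ^ |lam| * L ^ lam := by
                    apply mul_le_mul_of_nonneg_right ?_ (Real.rpow_nonneg hL0.le _)
                    exact Real.rpow_le_rpow_of_exponent_le (by norm_num) (le_abs_self lam)
                _ = Cl * L ^ lam := by rw [hCldef]
            · calc (Real.log (Real.exp 1 + (d x * L)⁻¹)) ^ lam ≤ (L/2) ^ lam :=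
                  Real.rpow_le_rpow_of_nonpos hL20 hLaml hlam.le
                _ = (L * (2:ℝ)⁻¹) ^ lam := by rw [show L/2 = L * (2:ℝ)⁻¹ by ring]
                _ = L ^ lam * ((2:ℝ)⁻¹) ^ lam := Real.mul_rpow hL0.le (by norm_num)
                _ = (2:ℝ) ^ (-lam) * L ^ lam := by
                    rw [Real.inv_rpow (by norm_num : (0:ℝ) ≤ 2), ← Real.rpow_neg (by norm_num : (0:ℝ) ≤ 2)]
                    ring
                _ ≤ 5 ^ |lam| * L ^ lam := by
                    apply mul_le_mul_of_nonneg_right ?_ (Real.rpow_nonneg hL0.le _)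
                    rw [abs_of_neg hlam]
                    exact Real.rpow_le_rpow (by norm_num) (by norm_num) (by linarith)
                _ = Cl * L ^ lam := by rw [hCldef]
          have hnn1 : (0:ℝ) ≤ (Real.log (Real.exp 1 + (d x * L)⁻¹)) ^ lam :=
            Real.rpow_nonneg (le_trans (by linarith) hLaml) _
          have hnn2 : (0:ℝ) ≤ ((τ (k+1) * L) ^ ((n:ℝ)-1))⁻¹ :=
            inv_nonneg.2 (Real.rpow_nonneg hτL.le _)
          calc ((d x * L)⁻¹) ^ ((n:ℝ)-1) * (Real.log (Real.exp 1 + (d x * L)⁻¹)) ^ lam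
              ≤ ((τ (k+1) * L) ^ ((n:ℝ)-1))⁻¹ * (Cl * L ^ lam) :=
                mul_le_mul hA1 hA2 hnn1 hnn2
            _ = Cl * L ^ lam * ((τ (k+1) * L) ^ ((n:ℝ)-1))⁻¹ := by ring
        have hch : c k ≤ h x := by
          simp only [hhdef]
          have hs := Finset.single_le_sum (f := fun j => (A j).indicator (fun _ => c j) x)
            (fun j _ => Set.indicator_nonneg (fun _ _ => hc0 j) x) hkK
          rwa [Set.indicator_of_mem hxAk] at hs
        exact hck.trans hch
      · exact absurd hd2 hxr
      · rw [hF0 x (hloc2 x hd2)]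
        exact hh0 x
  -- assemble
  have hZae : ∀ᵐ x : EuclideanSpace ℝ (Fin n), x ∉ J ∧ d x ≠ r^2 ∧ d x ≠ r := by
    have h1 : volume (J ∪ ({x : EuclideanSpace ℝ (Fin n) | d x = r^2}
        ∪ {x : EuclideanSpace ℝ (Fin n) | d x = r})) = 0 :=
      measure_union_null hJnull (measure_union_null (hlevel _ hr2pos) (hlevel _ hr))
    have h2 := (measure_eq_zero_iff_ae_notMem (μ := volume)).1 h1
    filter_upwards [h2] with x hx
    simp only [Set.mem_union, not_or, Set.mem_setOf_eq] at hx
    exact ⟨hx.1, hx.2.1, hx.2.2⟩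
  set F : EuclideanSpace ℝ (Fin n) → ℝ := fun x =>
    ‖fderiv ℝ U x‖ ^ ((n:ℝ)-1) * (Real.log (Real.exp 1 + ‖fderiv ℝ U x‖)) ^ lam with hFdef
  have haeF : F ≤ᵐ[volume] h := by
    filter_upwards [hZae] with x hx
    exact hpt x hx.1 hx.2.1 hx.2.2
  have hsum : ∫ x, h x = ∑ k ∈ Finset.range (K+1), (volume (A k)).toReal * c k := by
    rw [hhdef]
    rw [integral_finset_sum _ (fun k _ => (integrable_indicator_iff (hAmeas k)).2
      (integrableOn_const (hAfin k).ne))]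
    apply Finset.sum_congr rfl
    intro k _
    rw [integral_indicator_const _ (hAmeas k), smul_eq_mul]
    rfl
  have hterm : ∀ k, (volume (A k)).toReal * c k
      ≤ 3 * r * Cl * 4 ^ ((n:ℝ)-1) * L ^ lam * (L ^ ((n:ℝ)-1))⁻¹ := by
    intro k
    have hne : ENNReal.ofReal (r + 2*τ k) * ENNReal.ofReal (2*τ k) ^ (n-1) ≠ ⊤ :=
      (ENNReal.mul_lt_top ENNReal.ofReal_lt_top (ENNReal.pow_lt_top ENNReal.ofReal_lt_top)).ne
    have hτk := hτpos k
    have hv1 : (volume (A k)).toReal ≤ (r + 2*τ k) * (2*τ k) ^ ((n:ℝ)-1) := by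
      calc (volume (A k)).toReal
          ≤ (ENNReal.ofReal (r + 2*τ k) * ENNReal.ofReal (2*τ k) ^ (n-1)).toReal :=
            ENNReal.toReal_mono hne (hAvol k)
        _ = (r + 2*τ k) * (2*τ k) ^ (n-1 : ℕ) := by
            rw [ENNReal.toReal_mul, ENNReal.toReal_pow, ENNReal.toReal_ofReal (by positivity),
              ENNReal.toReal_ofReal (by positivity)]
        _ = (r + 2*τ k) * (2*τ k) ^ ((n:ℝ)-1) := by
            rw [← Real.rpow_natCast (2*τ k) (n-1)]
            congr 2
            push_cast [Nat.cast_sub (by omega : 1 ≤ n)]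
            ring
    have hkey : (2*τ k) ^ ((n:ℝ)-1) * ((τ (k+1) * L) ^ ((n:ℝ)-1))⁻¹
        = 4 ^ ((n:ℝ)-1) * (L ^ ((n:ℝ)-1))⁻¹ := by
      have h4 : 2*τ k = 4 * τ (k+1) := by rw [hττ]; ring
      have hτk1 := hτpos (k+1)
      rw [h4, Real.mul_rpow (by norm_num) hτk1.le, Real.mul_rpow hτk1.le hL0.le]
      have hP : 0 < (τ (k+1)) ^ ((n:ℝ)-1) := Real.rpow_pos_of_pos hτk1 _
      have hQ : 0 < L ^ ((n:ℝ)-1) := Real.rpow_pos_of_pos hL0 _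
      field_simp
    have hc0' := hc0 k
    calc (volume (A k)).toReal * c k
        ≤ ((r + 2*τ k) * (2*τ k) ^ ((n:ℝ)-1)) * c k := mul_le_mul_of_nonneg_right hv1 hc0'
      _ = (r + 2*τ k) * (Cl * L^lam)
            * ((2*τ k) ^ ((n:ℝ)-1) * ((τ (k+1) * L) ^ ((n:ℝ)-1))⁻¹) := by
          rw [hcdef]; ring
      _ = (r + 2*τ k) * (Cl * L^lam) * (4 ^ ((n:ℝ)-1) * (L ^ ((n:ℝ)-1))⁻¹) := by rw [hkey]
      _ ≤ (3*r) * (Cl * L^lam) * (4 ^ ((n:ℝ)-1) * (L ^ ((n:ℝ)-1))⁻¹) := by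
          have hb1 : r + 2*τ k ≤ 3*r := by linarith [hτler k]
          have hb2 : (0:ℝ) ≤ Cl * L^lam := by positivity
          have hb3 : (0:ℝ) ≤ 4 ^ ((n:ℝ)-1) * (L ^ ((n:ℝ)-1))⁻¹ := by positivity
          apply mul_le_mul_of_nonneg_right (mul_le_mul_of_nonneg_right hb1 hb2) hb3
      _ = 3 * r * Cl * 4 ^ ((n:ℝ)-1) * L ^ lam * (L ^ ((n:ℝ)-1))⁻¹ := by ring
  have hKb : ((K:ℝ)+1) ≤ 3 * L / Real.log 2 := by
    have h1 : (K:ℝ) < L / Real.log 2 + 1 := Nat.ceil_lt_add_one (by positivity)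
    have h2 : 1 ≤ L / Real.log 2 := (one_le_div hlog2).2 hL2
    have h3 : 3 * L / Real.log 2 = 3 * (L / Real.log 2) := by ring
    linarith
  have hfinal : ∑ k ∈ Finset.range (K+1), (volume (A k)).toReal * c k
      ≤ (9 * Cl * 4 ^ ((n:ℝ)-1) / Real.log 2) * r * L ^ (lam - ((n:ℝ)-2)) := by
    have hM0 : (0:ℝ) ≤ 3 * r * Cl * 4 ^ ((n:ℝ)-1) * L ^ lam * (L ^ ((n:ℝ)-1))⁻¹ := by positivity
    calc ∑ k ∈ Finset.range (K+1), (volume (A k)).toReal * c k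
        ≤ ∑ _k ∈ Finset.range (K+1), 3 * r * Cl * 4 ^ ((n:ℝ)-1) * L ^ lam * (L ^ ((n:ℝ)-1))⁻¹ :=
          Finset.sum_le_sum fun k _ => hterm k
      _ = ((K:ℝ)+1) * (3 * r * Cl * 4 ^ ((n:ℝ)-1) * L ^ lam * (L ^ ((n:ℝ)-1))⁻¹) := by
          rw [Finset.sum_const, Finset.card_range, nsmul_eq_mul]
          push_cast; ring
      _ ≤ (3 * L / Real.log 2) * (3 * r * Cl * 4 ^ ((n:ℝ)-1) * L ^ lam * (L ^ ((n:ℝ)-1))⁻¹) :=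
          mul_le_mul_of_nonneg_right hKb hM0
      _ = (9 * Cl * 4 ^ ((n:ℝ)-1) / Real.log 2) * r * (L ^ lam * (L ^ ((n:ℝ)-1))⁻¹ * L) := by
          field_simp
          ring
      _ = (9 * Cl * 4 ^ ((n:ℝ)-1) / Real.log 2) * r * L ^ (lam - ((n:ℝ)-2)) := by
          congr 1
          rw [show lam - ((n:ℝ)-2) = lam + (-((n:ℝ)-1)) + 1 by ring]
          rw [Real.rpow_add hL0, Real.rpow_add hL0, Real.rpow_one, Real.rpow_neg hL0.le]
  by_cases hInt : Integrable F volume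
  · calc ∫ x, F x ≤ ∫ x, h x := integral_mono_ae hInt hIh haeF
      _ = ∑ k ∈ Finset.range (K+1), (volume (A k)).toReal * c k := hsum
      _ ≤ _ := hfinal
  · rw [integral_undef hInt]
    have hpos : 0 < (9 * Cl * 4 ^ ((n:ℝ)-1) / Real.log 2) * r * L ^ (lam - ((n:ℝ)-2)) := by
      apply mul_pos (mul_pos (by positivity) hr) (Real.rpow_pos_of_pos hL0 _)
    linarith

/-- Energy estimate for the logarithmic cut-off around a segment `J` of length `r`
in `ℝⁿ` (case (ii) of Theorem 4.4): for
`u(x) = min(1, max(0, (log(1/d(x,J)) - log(1/r))/(log(1/r²) - log(1/r))))`, one has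
`∫ |∇u|^{n-1} (log(e+|∇u|))^λ ≤ C r (log(1/r))^{λ-(n-2)}` with `C = C(n,λ)`. -/
theorem thermos_energy_estimate (n : ℕ) (hn : 3 ≤ n) (lam : ℝ) :
    ∃ C > (0:ℝ), ∀ r : ℝ, 0 < r → r < 1/2 →
      ∫ x : EuclideanSpace ℝ (Fin n),
          ‖fderiv ℝ (fun y : EuclideanSpace ℝ (Fin n) =>
            min 1 (max 0
              ((Real.log (1 / Metric.infDist y
                  {z : EuclideanSpace ℝ (Fin n) |
                    |z ⟨0, by omega⟩| ≤ r/2 ∧ ∀ i, i ≠ ⟨0, by omega⟩ → z i = 0})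
                - Real.log (1/r)) /
               (Real.log (1/r^2) - Real.log (1/r))))) x‖ ^ ((n:ℝ)-1) *
          (Real.log (Real.exp 1 +
            ‖fderiv ℝ (fun y : EuclideanSpace ℝ (Fin n) =>
              min 1 (max 0
                ((Real.log (1 / Metric.infDist y
                    {z : EuclideanSpace ℝ (Fin n) |
                      |z ⟨0, by omega⟩| ≤ r/2 ∧ ∀ i, i ≠ ⟨0, by omega⟩ → z i = 0})
                  - Real.log (1/r)) /
                 (Real.log (1/r^2) - Real.log (1/r))))) x‖)) ^ lam
        ≤ C * r * (Real.log (1/r)) ^ (lam - ((n:ℝ)-2)) := by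
  refine ⟨9 * 5 ^ |lam| * 4 ^ ((n:ℝ)-1) / Real.log 2, ?_, fun r hr hr2 => main_est n hn lam r hr hr2⟩
  apply div_pos
  · apply mul_pos (mul_pos (by norm_num) (Real.rpow_pos_of_pos (by norm_num) _))
      (Real.rpow_pos_of_pos (by norm_num) _)
  · exact Real.log_pos (by norm_num)
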